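/- Let n ≥ 2d and let ℓ be a linear functional on the space H^S_{n,2d} of symmetric forms of degree 2d in n variables. Then ℓ(g) ≥ 0 for every symmetric form g of degree 2d that is a sum of squares of polynomials if and only if the quadratic form Q_ℓ on H_{n,d} defined by Q_ℓ(f) := ℓ(Sym_n(f^2)) is positive semidefinite, i.e. ℓ(Sym_n(f^2)) ≥ 0 for all forms f of degree d in n variables. -/

import Mathlib

open MvPolynomial

/-- The symmetrization `Sym_n(f) = (1/n!) Σ_{σ ∈ S_n} σ·f`. -/
noncomputable def symmetrize (n : ℕ) (f : MvPolynomial (Fin n) ℝ) :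
    MvPolynomial (Fin n) ℝ :=
  C ((n.factorial : ℝ)⁻¹) * ∑ σ : Equiv.Perm (Fin n), rename (⇑σ) f

lemma eval_mul_of_isHomogeneous {n m : ℕ} {φ : MvPolynomial (Fin n) ℝ}
    (h : φ.IsHomogeneous m) (t : ℝ) (x : Fin n → ℝ) :
    eval (fun i => t * x i) φ = t ^ m * eval x φ := by
  rw [eval_eq, eval_eq, Finset.mul_sum]
  refine Finset.sum_congr rfl fun d hd => ?_
  have hdeg : d.degree = m := by
    rw [Finsupp.degree_eq_weight_one]
    exact h (mem_support_iff.mp hd)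
  have : ∏ i ∈ d.support, (t * x i) ^ d i
      = (∏ i ∈ d.support, t ^ d i) * ∏ i ∈ d.support, x i ^ d i := by
    rw [← Finset.prod_mul_distrib]
    exact Finset.prod_congr rfl fun i _ => mul_pow _ _ _
  rw [this, Finset.prod_pow_eq_pow_sum]
  have : ∑ i ∈ d.support, d i = m := hdeg
  rw [this]; ring

open Polynomial in
lemma sq_coeff_core (s : Multiset (Polynomial ℝ)) (e : ℕ)
    (hv : ∀ u ∈ s, ∀ i j : ℕ, i + j = 2 * e → i ≠ j → u.coeff i * u.coeff j = 0) :
    ((s.map (fun u => u * u)).sum).coeff (2 * e)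
      = (s.map (fun u => u.coeff e ^ 2)).sum := by
  induction s using Multiset.induction with
  | empty => simp
  | cons u s ih =>
    simp only [Multiset.map_cons, Multiset.sum_cons, Polynomial.coeff_add]
    rw [ih (fun u hu => hv u (Multiset.mem_cons_of_mem hu))]
    congr 1
    rw [Polynomial.coeff_mul]
    rw [Finset.sum_eq_single (e, e)]
    · simp [sq]
    · rintro ⟨i, j⟩ hmem hne
      have hij : i + j = 2 * e := Finset.HasAntidiagonal.mem_antidiagonal.mp hmem
      have hne' : i ≠ j := by
        rintro rfl
        have : i = e := by omega
        exact hne (by rw [this])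
      exact hv u (Multiset.mem_cons_self u s) i j hij hne'
    · intro h
      exact absurd (Finset.HasAntidiagonal.mem_antidiagonal.mpr (by ring)) h

open Polynomial in
lemma sq_sum_monomial_coeff (s : Multiset (Polynomial ℝ)) (d : ℕ) (c : ℝ)
    (h : (s.map (fun u => u * u)).sum = Polynomial.C c * Polynomial.X ^ (2 * d)) :
    ∀ u ∈ s, ∀ e, e ≠ d → u.coeff e = 0 := by
  -- bound on degrees
  obtain ⟨B, hB⟩ : ∃ B, ∀ u ∈ s, u.natDegree ≤ B := by
    refine ⟨(s.map Polynomial.natDegree).sum, fun u hu => ?_⟩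
    exact Multiset.single_le_sum (fun x hx => Nat.zero_le x) _
      (Multiset.mem_map_of_mem _ hu)
  -- coefficient of 2e of the RHS vanishes for e ≠ d
  have hrhs : ∀ e : ℕ, e ≠ d →
      ((s.map (fun u => u * u)).sum).coeff (2 * e) = 0 := by
    intro e he
    rw [h, Polynomial.coeff_C_mul, Polynomial.coeff_X_pow, if_neg (by omega)]
    ring
  -- from vanishing of the sum of squares of e-coefficients, get each zero
  have hz : ∀ e : ℕ,
      ((s.map (fun u => u * u)).sum).coeff (2 * e) = (s.map (fun u => u.coeff e ^ 2)).sum →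
      e ≠ d → ∀ u ∈ s, u.coeff e = 0 := by
    intro e hcore he u hu
    have hsum : (s.map (fun u => u.coeff e ^ 2)).sum = 0 := by
      rw [← hcore]; exact hrhs e he
    have hnn : ∀ x ∈ s.map (fun u => u.coeff e ^ 2), (0:ℝ) ≤ x := by
      intro x hx
      obtain ⟨v, _, rfl⟩ := Multiset.mem_map.mp hx
      positivity
    have hle : u.coeff e ^ 2 ≤ (s.map (fun u => u.coeff e ^ 2)).sum :=
      Multiset.single_le_sum hnn _ (Multiset.mem_map_of_mem _ hu)
    have : u.coeff e ^ 2 = 0 := le_antisymm (hsum ▸ hle) (by positivity)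
    exact pow_eq_zero_iff (by norm_num) |>.mp this
  -- high coefficients vanish
  have high : ∀ k : ℕ, ∀ u ∈ s, ∀ e, d < e → B + 1 ≤ e + k → u.coeff e = 0 := by
    intro k
    induction k with
    | zero =>
      intro u hu e _ hBe
      exact Polynomial.coeff_eq_zero_of_natDegree_lt (lt_of_le_of_lt (hB u hu) (by omega))
    | succ k ih =>
      intro u hu e hde hBe
      by_cases hk : B + 1 ≤ e + k
      · exact ih u hu e hde hk
      · refine hz e (sq_coeff_core s e ?_) (by omega) u hu
        intro v hv i j hij hne
        have : e < max i j := by omega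
        rcases Nat.lt_or_ge e i with hi | hi
        · rw [ih v hv i (by omega) (by omega), zero_mul]
        · rw [ih v hv j (by omega) (by omega), mul_zero]
  -- low coefficients vanish
  have low : ∀ e, ∀ u ∈ s, e < d → u.coeff e = 0 := by
    intro e
    induction e using Nat.strong_induction_on with
    | _ e ih =>
      intro u hu hed
      refine hz e (sq_coeff_core s e ?_) (by omega) u hu
      intro v hv i j hij hne
      rcases Nat.lt_or_ge i e with hi | hi
      · rw [ih i hi v hv (by omega), zero_mul]
      · rw [ih j (by omega) v hv (by omega), mul_zero]
  intro u hu e he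
  rcases Nat.lt_or_ge e d with hlt | hge
  · exact low e u hu hlt
  · exact high (B + 1) u hu e (by omega) (by omega)
lemma homog_of_sq_sum {n d : ℕ} (l : Multiset (MvPolynomial (Fin n) ℝ))
    (hg : ((l.map fun p => p * p).sum).IsHomogeneous (2 * d)) :
    ∀ p ∈ l, p.IsHomogeneous d := by
  set g : MvPolynomial (Fin n) ℝ := (l.map fun p => p * p).sum with hgdef
  obtain ⟨N, hN⟩ : ∃ N, ∀ q ∈ l, q.totalDegree ≤ N :=
    ⟨(l.map totalDegree).sum, fun q hq =>
      Multiset.single_le_sum (fun x _ => Nat.zero_le x) _ (Multiset.mem_map_of_mem _ hq)⟩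
  -- the truncated homogeneous decomposition
  have hdecomp : ∀ q ∈ l, ∑ j ∈ Finset.range (N + 1), homogeneousComponent j q = q := by
    intro q hq
    have hsub : Finset.range (q.totalDegree + 1) ⊆ Finset.range (N + 1) :=
      Finset.range_subset_range.mpr (by have := hN q hq; omega)
    conv_rhs => rw [← sum_homogeneousComponent q]
    refine (Finset.sum_subset hsub fun i _ hi => ?_).symm
    simp only [Finset.mem_range, not_lt] at hi
    exact homogeneousComponent_eq_zero _ _ (by omega)
  -- key vanishing statement
  have key : ∀ p ∈ l, ∀ e, e ≠ d → homogeneousComponent e p = 0 := by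
    intro p hp e he
    rcases Nat.lt_or_ge N e with hNe | heN
    · exact homogeneousComponent_eq_zero _ _ (lt_of_le_of_lt (hN p hp) hNe)
    · -- use evaluation at every point
      have heval : ∀ x : Fin n → ℝ, eval x (homogeneousComponent e p) = 0 := by
        intro x
        set U : MvPolynomial (Fin n) ℝ → Polynomial ℝ := fun q =>
          ∑ j ∈ Finset.range (N + 1),
            Polynomial.C (eval x (homogeneousComponent j q)) * Polynomial.X ^ j with hU
        have hevalU : ∀ q ∈ l, ∀ t : ℝ, (U q).eval t = eval (fun i => t * x i) q := by
          intro q hq t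
          conv_rhs => rw [← hdecomp q hq]
          rw [map_sum, hU]
          rw [Polynomial.eval_finset_sum]
          refine Finset.sum_congr rfl fun j _ => ?_
          rw [eval_mul_of_isHomogeneous (homogeneousComponent_isHomogeneous j q) t x,
            Polynomial.eval_mul, Polynomial.eval_C, Polynomial.eval_pow, Polynomial.eval_X]
          ring
        have hmm : ((l.map U).map (fun u => u * u)) = l.map fun q => U q * U q :=
          Multiset.map_map _ _ _
        have hsum : ((l.map fun q => U q * U q)).sum
            = Polynomial.C (eval x g) * Polynomial.X ^ (2 * d) := by
          apply Polynomial.funext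
          intro t
          have h1 : Polynomial.eval t ((l.map fun q => U q * U q).sum)
              = ((l.map fun q => U q * U q).map (Polynomial.eval t)).sum := by
            rw [← Polynomial.coe_evalRingHom]
            exact map_multiset_sum (Polynomial.evalRingHom t) _
          rw [h1, Multiset.map_map]
          have h2 : ∀ q ∈ l, (Polynomial.eval t ∘ fun q => U q * U q) q
              = (fun q => eval (fun i => t * x i) q * eval (fun i => t * x i) q) q := by
            intro q hq
            simp only [Function.comp_apply, Polynomial.eval_mul]
            rw [hevalU q hq]
          rw [Multiset.map_congr rfl h2]
          have h3 : ((l.map fun q =>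
              eval (fun i => t * x i) q * eval (fun i => t * x i) q)).sum
              = eval (fun i => t * x i) g := by
            rw [hgdef, map_multiset_sum (eval fun i => t * x i), Multiset.map_map]
            exact congrArg Multiset.sum (Multiset.map_congr rfl fun q _ => by
              simp [Function.comp_apply, map_mul])
          rw [h3, eval_mul_of_isHomogeneous hg t x, Polynomial.eval_mul, Polynomial.eval_C,
            Polynomial.eval_pow, Polynomial.eval_X]
          ring
        rw [← hmm] at hsum
        have hco := sq_sum_monomial_coeff (l.map U) d (eval x g) hsum (U p)
          (Multiset.mem_map_of_mem _ hp) e he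
        rw [hU] at hco
        simp only [Polynomial.finset_sum_coeff, Polynomial.coeff_C_mul,
          Polynomial.coeff_X_pow] at hco
        rw [Finset.sum_eq_single e] at hco
        · simpa using hco
        · intro j _ hj
          simp [Ne.symm hj]
        · intro hmem
          exact absurd (Finset.mem_range.mpr (by omega)) hmem
      have h0 : ∀ x : Fin n → ℝ, eval x (homogeneousComponent e p) = eval x 0 := by
        intro x; rw [heval x, map_zero]
      exact MvPolynomial.funext h0
  intro p hp
  intro m hm
  change (Finsupp.weight (fun _ => 1)) m = d
  rw [← Finsupp.degree_eq_weight_one]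
  by_contra hne
  have h0 := key p hp m.degree hne
  have hcm : coeff m (homogeneousComponent m.degree p) = coeff m p := by
    rw [coeff_homogeneousComponent, if_pos rfl]
  rw [h0, coeff_zero] at hcm
  exact hm hcm.symm


lemma isSumSq_exists_multiset {R : Type*} [CommRing R] {g : R} (h : IsSumSq g) :
    ∃ l : Multiset R, g = (l.map fun p => p * p).sum := by
  induction h with
  | zero => exact ⟨0, by simp⟩
  | sq_add a pS ih =>
    obtain ⟨l, rfl⟩ := ih
    exact ⟨a ::ₘ l, by simp⟩
lemma symmetrize_isSymmetric (n : ℕ) (f : MvPolynomial (Fin n) ℝ) :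
    (symmetrize n f).IsSymmetric := by
  intro τ
  unfold symmetrize
  rw [map_mul, rename_C, map_sum]
  congr 1
  rw [← Equiv.sum_comp (Equiv.mulLeft τ) (fun σ => rename (⇑σ) f)]
  refine Finset.sum_congr rfl fun σ _ => ?_
  rw [rename_rename]
  rfl

lemma symmetrize_isHomogeneous {n m : ℕ} {f : MvPolynomial (Fin n) ℝ}
    (hf : f.IsHomogeneous m) : (symmetrize n f).IsHomogeneous m := by
  unfold symmetrize
  exact IsHomogeneous.C_mul
    (IsHomogeneous.sum _ _ _ fun σ _ => hf.rename_isHomogeneous) _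

lemma symmetrize_sq_isSumSq (n : ℕ) (f : MvPolynomial (Fin n) ℝ) :
    IsSumSq (symmetrize n (f ^ 2)) := by
  have hnn : (0:ℝ) ≤ (n.factorial : ℝ)⁻¹ := by positivity
  set a : ℝ := Real.sqrt (n.factorial : ℝ)⁻¹ with ha
  have haa : a * a = (n.factorial : ℝ)⁻¹ := Real.mul_self_sqrt hnn
  have : symmetrize n (f ^ 2)
      = ∑ σ : Equiv.Perm (Fin n), (C a * rename (⇑σ) f) * (C a * rename (⇑σ) f) := by
    unfold symmetrize
    rw [Finset.mul_sum]
    refine Finset.sum_congr rfl fun σ _ => ?_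
    rw [map_pow, ← haa, map_mul]
    ring
  rw [this]
  exact IsSumSq.sum_mul_self _ _

lemma symmetrize_of_isSymmetric {n : ℕ} {g : MvPolynomial (Fin n) ℝ}
    (hg : g.IsSymmetric) : symmetrize n g = g := by
  unfold symmetrize
  have : ∑ σ : Equiv.Perm (Fin n), rename (⇑σ) g = n.factorial • g := by
    rw [Finset.sum_congr rfl fun σ _ => hg σ, Finset.sum_const, Finset.card_univ,
      Fintype.card_perm, Fintype.card_fin]
  rw [this, C_mul', ← Nat.cast_smul_eq_nsmul ℝ, smul_smul,
    inv_mul_cancel₀ (by exact_mod_cast n.factorial_ne_zero), one_smul]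

lemma symmetrize_multiset_sum (n : ℕ) (l : Multiset (MvPolynomial (Fin n) ℝ)) :
    symmetrize n l.sum = (l.map (symmetrize n)).sum := by
  induction l using Multiset.induction with
  | empty => simp [symmetrize]
  | cons p l ih =>
    simp only [Multiset.sum_cons, Multiset.map_cons]
    rw [← ih]
    unfold symmetrize
    simp [map_add, Finset.sum_add_distrib, mul_add]

/-- A linear functional `ℓ` (on `H^S_{n,2d}`, represented here by an arbitrary
linear extension to the polynomial ring) is nonnegative on all symmetric
degree-`2d` sums of squares iff the quadratic form `f ↦ ℓ(Sym_n(f²))` is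
positive semidefinite on the forms of degree `d`. -/
theorem dual_cone_iff_psd (n d : ℕ) (hn : 2 * d ≤ n)
    (ℓ : MvPolynomial (Fin n) ℝ →ₗ[ℝ] ℝ) :
    (∀ g : MvPolynomial (Fin n) ℝ,
        g.IsSymmetric → g.IsHomogeneous (2 * d) → IsSumSq g → 0 ≤ ℓ g) ↔
    (∀ f : MvPolynomial (Fin n) ℝ,
        f.IsHomogeneous d → 0 ≤ ℓ (symmetrize n (f ^ 2))) := by
  constructor
  · intro h f hf
    refine h _ (symmetrize_isSymmetric n _) (symmetrize_isHomogeneous ?_)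
      (symmetrize_sq_isSumSq n f)
    simpa [mul_comm] using hf.pow 2
  · intro h g hsym hhom hsq
    obtain ⟨l, rfl⟩ := isSumSq_exists_multiset hsq
    have hps := homog_of_sq_sum l hhom
    have hrw : (l.map fun p => p * p).sum = (l.map fun p => symmetrize n (p * p)).sum := by
      conv_lhs => rw [← symmetrize_of_isSymmetric hsym, symmetrize_multiset_sum,
        Multiset.map_map]
      rfl
    rw [hrw, map_multiset_sum ℓ, Multiset.map_map]
    refine Multiset.sum_nonneg ?_
    intro y hy
    obtain ⟨p, hp, rfl⟩ := Multiset.mem_map.mp hy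
    have := h p (hps p hp)
    simpa [Function.comp, sq] using this
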